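/- Let q be a prime power and let v ≥ 2, 0 ≤ k ≤ v−1, and d be integers. Then A_q(v,d;k) ≤ ⌊ (q^v−1)/(q^{v−k}−1) · A_q(v−1,d;k) ⌋, where ⌊·⌋ denotes the floor of the rational number. -/
import Mathlib


open scoped Classical

/-- The subspace distance `d_S(X,Y) = dim(X+Y) - dim(X∩Y)` between two subspaces. -/
noncomputable def subspaceDist {F V : Type*} [Field F] [AddCommGroup V] [Module F V]
    (X Y : Submodule F V) : ℕ :=
  Module.finrank F ↥(X ⊔ Y) - Module.finrank F ↥(X ⊓ Y)

/-- `C` is a subspace code with minimum subspace distance at least `d`. -/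
def IsSubspaceCode {F V : Type*} [Field F] [AddCommGroup V] [Module F V]
    (d : ℕ) (C : Finset (Submodule F V)) : Prop :=
  ∀ X ∈ C, ∀ Y ∈ C, X ≠ Y → d ≤ subspaceDist X Y

/-- `A_q(v,d)`: the maximum cardinality of a subspace code in `F^v` (where `#F = q`)
with minimum subspace distance at least `d`. -/
noncomputable def maxCode (F : Type*) [Field F] [Fintype F] (v d : ℕ) : ℕ :=
  sSup {n | ∃ C : Finset (Submodule F (Fin v → F)), IsSubspaceCode d C ∧ C.card = n}

/-- `A_q(v,d;k)`: the maximum cardinality of a constant dimension code in `F^v`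
(where `#F = q`) with minimum subspace distance at least `d` and all codewords of
dimension `k`. -/
noncomputable def maxCodeDim (F : Type*) [Field F] [Fintype F] (v d k : ℕ) : ℕ :=
  sSup {n | ∃ C : Finset (Submodule F (Fin v → F)), IsSubspaceCode d C ∧
    (∀ X ∈ C, Module.finrank F ↥X = k) ∧ C.card = n}

/-- `[x]_q = (q^x - 1)/(q - 1)`, the number of points of `PG(F_q^x)`. -/
def gaussNum (q x : ℕ) : ℕ := ∑ i ∈ Finset.range x, q ^ i

open Module Submodule Finset

section Aux

variable {F : Type*} [Field F]

lemma aux_subspaceDist_map {V W : Type*} [AddCommGroup V] [Module F V] [AddCommGroup W]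
    [Module F W] (e : V ≃ₗ[F] W) (X Y : Submodule F V) :
    subspaceDist (X.map (e : V →ₗ[F] W)) (Y.map (e : V →ₗ[F] W)) = subspaceDist X Y := by
  unfold subspaceDist
  rw [← Submodule.map_sup, ← Submodule.map_inf (e : V →ₗ[F] W) (by
    simpa using e.injective),
    LinearEquiv.finrank_map_eq, LinearEquiv.finrank_map_eq]

lemma aux_comap_subtype_sup {V : Type*} [AddCommGroup V] [Module F V]
    {H X Y : Submodule F V} (hX : X ≤ H) (hY : Y ≤ H) :
    (X ⊔ Y).comap H.subtype = X.comap H.subtype ⊔ Y.comap H.subtype := by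
  apply Submodule.map_injective_of_injective H.injective_subtype
  rw [Submodule.map_sup, Submodule.map_comap_subtype, Submodule.map_comap_subtype,
    Submodule.map_comap_subtype, inf_eq_right.mpr hX, inf_eq_right.mpr hY,
    inf_eq_right.mpr (sup_le hX hY)]

lemma aux_finrank_comap_subtype {V : Type*} [AddCommGroup V] [Module F V]
    {H X : Submodule F V} (hX : X ≤ H) :
    finrank F (X.comap H.subtype) = finrank F X :=
  (Submodule.comapSubtypeEquivOfLe hX).finrank_eq

lemma aux_subspaceDist_comap_subtype {V : Type*} [AddCommGroup V] [Module F V]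
    {H X Y : Submodule F V} (hX : X ≤ H) (hY : Y ≤ H) :
    subspaceDist (X.comap H.subtype) (Y.comap H.subtype) = subspaceDist X Y := by
  unfold subspaceDist
  rw [← aux_comap_subtype_sup hX hY, ← Submodule.comap_inf,
    aux_finrank_comap_subtype (sup_le hX hY),
    aux_finrank_comap_subtype (le_trans inf_le_left hX)]

/-- Transport a code living inside a subspace `H` of rank `m` to a code in `Fin m → F`. -/
lemma aux_exists_code_of_le {V : Type*} [AddCommGroup V] [Module F V] [FiniteDimensional F V]
    {d k m : ℕ} (H : Submodule F V) (hH : finrank F H = m)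
    (C : Finset (Submodule F V)) (hle : ∀ X ∈ C, X ≤ H)
    (h1 : IsSubspaceCode d C) (h2 : ∀ X ∈ C, finrank F X = k) :
    ∃ C' : Finset (Submodule F (Fin m → F)), IsSubspaceCode d C' ∧
      (∀ X ∈ C', finrank F X = k) ∧ C'.card = C.card := by
  obtain ⟨e⟩ : Nonempty (↥H ≃ₗ[F] (Fin m → F)) :=
    FiniteDimensional.nonempty_linearEquiv_of_finrank_eq
      (by simp [hH, Module.finrank_pi])
  set T : Submodule F V → Submodule F (Fin m → F) :=
    fun X => (X.comap H.subtype).map (e : ↥H →ₗ[F] (Fin m → F)) with hTdef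
  have hback : ∀ X, X ≤ H →
      ((T X).comap (e : ↥H →ₗ[F] (Fin m → F))).map H.subtype = X := by
    intro X hX
    rw [hTdef]
    rw [Submodule.comap_map_eq_of_injective (by simpa using e.injective)]
    rw [Submodule.map_comap_subtype, inf_eq_right.mpr hX]
  have hinj : Set.InjOn T ↑C := by
    intro X hX Y hY hXY
    rw [← hback X (hle X hX), ← hback Y (hle Y hY), hXY]
  have hrank : ∀ X ∈ C, finrank F (T X) = k := by
    intro X hX
    rw [hTdef]
    simp only
    rw [LinearEquiv.finrank_map_eq, aux_finrank_comap_subtype (hle X hX)]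
    exact h2 X hX
  have hdist : ∀ X ∈ C, ∀ Y ∈ C, subspaceDist (T X) (T Y) = subspaceDist X Y := by
    intro X hX Y hY
    rw [hTdef]
    simp only
    rw [aux_subspaceDist_map, aux_subspaceDist_comap_subtype (hle X hX) (hle Y hY)]
  refine ⟨C.image T, ?_, ?_, Finset.card_image_of_injOn hinj⟩
  · intro X' hX' Y' hY' hne
    obtain ⟨X, hX, rfl⟩ := Finset.mem_image.mp hX'
    obtain ⟨Y, hY, rfl⟩ := Finset.mem_image.mp hY'
    have hXY : X ≠ Y := fun h => hne (by rw [h])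
    rw [hdist X hX Y hY]
    exact h1 X hX Y hY hXY
  · intro X' hX'
    obtain ⟨X, hX, rfl⟩ := Finset.mem_image.mp hX'
    exact hrank X hX

lemma aux_card_le_maxCodeDim (F : Type*) [Field F] [Fintype F] (v d k : ℕ)
    (C : Finset (Submodule F (Fin v → F))) (h1 : IsSubspaceCode d C)
    (h2 : ∀ X ∈ C, finrank F X = k) : C.card ≤ maxCodeDim F v d k := by
  have : Fintype (Submodule F (Fin v → F)) := Fintype.ofFinite _
  refine le_csSup ⟨Fintype.card (Submodule F (Fin v → F)), ?_⟩ ⟨C, h1, h2, rfl⟩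
  rintro n ⟨D, -, -, rfl⟩
  exact Finset.card_le_univ D

lemma aux_exists_maxCodeDim (F : Type*) [Field F] [Fintype F] (v d k : ℕ) :
    ∃ C : Finset (Submodule F (Fin v → F)), IsSubspaceCode d C ∧
      (∀ X ∈ C, finrank F X = k) ∧ C.card = maxCodeDim F v d k := by
  have : Fintype (Submodule F (Fin v → F)) := Fintype.ofFinite _
  have hne : {n | ∃ C : Finset (Submodule F (Fin v → F)), IsSubspaceCode d C ∧
      (∀ X ∈ C, Module.finrank F ↥X = k) ∧ C.card = n}.Nonempty :=
    ⟨0, ∅, by intro X hX; simp at hX, by intro X hX; simp at hX, by simp⟩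
  have hbdd : BddAbove {n | ∃ C : Finset (Submodule F (Fin v → F)), IsSubspaceCode d C ∧
      (∀ X ∈ C, Module.finrank F ↥X = k) ∧ C.card = n} := by
    refine ⟨Fintype.card (Submodule F (Fin v → F)), ?_⟩
    rintro n ⟨D, -, -, rfl⟩
    exact Finset.card_le_univ D
  exact Nat.sSup_mem hne hbdd

end Aux

/-- Johnson type bound II (hyperplane version):
A_q(v,d;k) ≤ ⌊(q^v-1)/(q^{v-k}-1) · A_q(v-1,d;k)⌋. -/
theorem johnson_bound_II_hyperplane (q v d k : ℕ) (F : Type*) [Field F] [Fintype F]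
    (hF : Fintype.card F = q) (hv : 2 ≤ v) (hkv : k ≤ v - 1) :
    maxCodeDim F v d k ≤
      ⌊((q : ℚ) ^ v - 1) / ((q : ℚ) ^ (v - k) - 1) * (maxCodeDim F (v - 1) d k : ℚ)⌋₊ := by
  classical
  have hq2 : 2 ≤ q := hF ▸ Fintype.one_lt_card
  have hk : k ≤ v := le_trans hkv (Nat.sub_le v 1)
  have hvk : 1 ≤ v - k := by omega
  set M := maxCodeDim F v d k with hM
  set A := maxCodeDim F (v - 1) d k with hA
  obtain ⟨C, hC1, hC2, hC3⟩ := aux_exists_maxCodeDim F v d k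
  set B := Pi.basisFun F (Fin v) with hB
  set E := B.toDualEquiv with hE
  have hfinV : finrank F (Fin v → F) = v := by simp [Module.finrank_pi]
  set T : Finset (Fin v → F) := Finset.univ.filter (fun a => a ≠ 0) with hT
  -- inner count: number of nonzero a with X ≤ ker (E a) is q^(v-k) - 1
  have hinner : ∀ X ∈ C,
      (Finset.univ.filter fun a : Fin v → F => a ≠ 0 ∧ X ≤ LinearMap.ker (E a)).card
      = q ^ (v - k) - 1 := by
    intro X hX
    set S : Submodule F (Fin v → F) :=
      X.dualAnnihilator.map (E.symm : Module.Dual F (Fin v → F) →ₗ[F] (Fin v → F)) with hS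
    have hmem : ∀ a : Fin v → F, a ∈ S ↔ X ≤ LinearMap.ker (E a) := by
      intro a
      constructor
      · rintro ⟨φ, hφ, rfl⟩
        simp only [SetLike.mem_coe] at hφ
        intro x hx
        have h0 := (Submodule.mem_dualAnnihilator φ).1 hφ x hx
        simpa using h0
      · intro h
        refine ⟨E a, ?_, E.symm_apply_apply a⟩
        rw [SetLike.mem_coe, Submodule.mem_dualAnnihilator]
        intro w hw
        exact LinearMap.mem_ker.1 (h hw)
    have hrankS : finrank F S = v - k := by
      have h1 : finrank F S = finrank F X.dualAnnihilator :=
        LinearEquiv.finrank_map_eq E.symm _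
      have h2 : finrank F X.dualAnnihilator = finrank F ((Fin v → F) ⧸ X) :=
        (Subspace.quotEquivAnnihilator X).finrank_eq.symm
      have h3 : finrank F ((Fin v → F) ⧸ X) + finrank F X = v := by
        rw [Submodule.finrank_quotient_add_finrank, hfinV]
      rw [h1, h2]
      have := hC2 X hX
      omega
    have hcardS : Fintype.card S = q ^ (v - k) := by
      rw [card_eq_pow_finrank (K := F) (V := ↥S), hF, hrankS]
    have hfilter_eq : (Finset.univ.filter fun a : Fin v → F => a ∈ S)
        = Set.toFinset (S : Set (Fin v → F)) := by
      ext a; simp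
    have hcard_filter : (Finset.univ.filter fun a : Fin v → F => a ∈ S).card
        = q ^ (v - k) := by
      rw [hfilter_eq, Set.toFinset_card, ← hcardS]
      exact Fintype.card_congr (Equiv.refl _)
    have hsplit : (Finset.univ.filter fun a : Fin v → F => a ≠ 0 ∧ X ≤ LinearMap.ker (E a))
        = (Finset.univ.filter fun a : Fin v → F => a ∈ S).erase 0 := by
      ext a
      simp only [Finset.mem_filter, Finset.mem_univ, true_and, Finset.mem_erase, hmem]
    rw [hsplit, Finset.card_erase_of_mem (by simp [S.zero_mem]), hcard_filter]
  -- outer bound : for a ≠ 0, the subcode inside ker (E a) has size at most A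
  have houter : ∀ a : Fin v → F, a ≠ 0 →
      (C.filter fun X => X ≤ LinearMap.ker (E a)).card ≤ A := by
    intro a ha
    have hfa : (E a : Module.Dual F (Fin v → F)) ≠ 0 := by
      intro h
      exact ha (by simpa [h] using (E.symm_apply_apply a).symm)
    have hker : finrank F (LinearMap.ker (E a)) = v - 1 := by
      have := Module.Dual.finrank_ker_add_one_of_ne_zero hfa
      rw [hfinV] at this
      omega
    obtain ⟨C', h1', h2', h3'⟩ := aux_exists_code_of_le (LinearMap.ker (E a)) hker
      (C.filter fun X => X ≤ LinearMap.ker (E a))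
      (fun X hX => (Finset.mem_filter.mp hX).2)
      (fun X hX Y hY hXY => hC1 X (Finset.mem_filter.mp hX).1 Y (Finset.mem_filter.mp hY).1 hXY)
      (fun X hX => hC2 X (Finset.mem_filter.mp hX).1)
    rw [← h3']
    exact aux_card_le_maxCodeDim F (v - 1) d k C' h1' h2'
  -- double counting
  have hswap : ∑ X ∈ C,
      (Finset.univ.filter fun a : Fin v → F => a ≠ 0 ∧ X ≤ LinearMap.ker (E a)).card
      = ∑ a ∈ T, (C.filter fun X => X ≤ LinearMap.ker (E a)).card := by
    have hff : ∀ X : Submodule F (Fin v → F),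
        (Finset.univ.filter fun a : Fin v → F => a ≠ 0 ∧ X ≤ LinearMap.ker (E a))
        = T.filter fun a => X ≤ LinearMap.ker (E a) := by
      intro X
      rw [hT, Finset.filter_filter]
    simp_rw [hff, Finset.card_filter]
    exact Finset.sum_comm
  have hTcard : T.card = q ^ v - 1 := by
    rw [hT, Finset.filter_ne', Finset.card_erase_of_mem (Finset.mem_univ _),
      Finset.card_univ, Fintype.card_fun, Fintype.card_fin, hF]
  have hnat : M * (q ^ (v - k) - 1) ≤ (q ^ v - 1) * A := by
    calc M * (q ^ (v - k) - 1)
        = ∑ X ∈ C, (q ^ (v - k) - 1) := by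
          rw [Finset.sum_const, hC3, smul_eq_mul]
      _ = ∑ X ∈ C, (Finset.univ.filter
            fun a : Fin v → F => a ≠ 0 ∧ X ≤ LinearMap.ker (E a)).card :=
          (Finset.sum_congr rfl fun X hX => (hinner X hX).symm)
      _ = ∑ a ∈ T, (C.filter fun X => X ≤ LinearMap.ker (E a)).card := hswap
      _ ≤ ∑ a ∈ T, A := Finset.sum_le_sum fun a ha =>
          houter a (Finset.mem_filter.mp ha).2
      _ = T.card * A := by rw [Finset.sum_const, smul_eq_mul]
      _ = (q ^ v - 1) * A := by rw [hTcard]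
  -- final rational manipulation
  have h1q : 1 ≤ q ^ (v - k) := Nat.one_le_pow _ _ (by omega)
  have h1q' : 1 ≤ q ^ v := Nat.one_le_pow _ _ (by omega)
  apply Nat.le_floor
  have hcast : (M : ℚ) * ((q : ℚ) ^ (v - k) - 1) ≤ ((q : ℚ) ^ v - 1) * (A : ℚ) := by
    have := (Nat.cast_le (α := ℚ)).2 hnat
    rwa [Nat.cast_mul, Nat.cast_mul, Nat.cast_sub h1q, Nat.cast_sub h1q',
      Nat.cast_pow, Nat.cast_pow, Nat.cast_one] at this
  have hpos : (0 : ℚ) < (q : ℚ) ^ (v - k) - 1 := by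
    have hq1 : (1 : ℚ) < (q : ℚ) := by exact_mod_cast hq2
    have : (1 : ℚ) < (q : ℚ) ^ (v - k) := one_lt_pow₀ hq1 (by omega)
    linarith
  rw [div_mul_eq_mul_div, le_div_iff₀ hpos]
  linarith
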